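/- If g(t) ∈ ℂ[t] is a nonzero polynomial and α is a root of g with |α| = 1, then the polynomial t^{deg g}·g(t)·\overline{g}(1/t) (where \overline{g} denotes the polynomial with complex-conjugated coefficients) has α as a root of even multiplicity. Consequently, any polynomial in ℂ[t] having a unit-norm root of odd multiplicity cannot be written as λ·t^k·g(t)·\overline{g}(1/t) for λ ∈ ℂ, k ∈ ℤ, g ∈ ℂ[t]. -/

import Mathlib

open Polynomial LaurentPolynomial

lemma my_reverse_pow {K : Type*} [Field K] (q : K[X]) (n : ℕ) :
    (q ^ n).reverse = q.reverse ^ n := by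
  induction n with
  | zero => rw [pow_zero, pow_zero, ← Polynomial.C_1, reverse_C]
  | succ n ih => rw [pow_succ, reverse_mul_of_domain, ih, pow_succ]

lemma my_reverse_X_sub_C {K : Type*} [Field K] {c : K} (hc : c ≠ 0) :
    (X - Polynomial.C c).reverse
      = Polynomial.C (-c) * (X - Polynomial.C c⁻¹) := by
  unfold Polynomial.reverse
  rw [natDegree_X_sub_C, reflect_sub, reflect_C, ← pow_one (X : K[X]),
    reflect_monomial]
  have h1 : revAt 1 1 = 0 := by rw [revAt_le le_rfl]
  rw [h1, pow_zero, pow_one]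
  have h2 : Polynomial.C (-c) * Polynomial.C c⁻¹ = (-1 : K[X]) := by
    rw [← Polynomial.C_mul, neg_mul, mul_inv_cancel₀ hc]; simp
  rw [mul_sub, h2, Polynomial.C_neg]
  ring

lemma my_rootMult_reverse {K : Type*} [Field K] (q : K[X]) {β : K} (hβ : β ≠ 0) :
    q.reverse.rootMultiplicity β = q.rootMultiplicity β⁻¹ := by
  rcases eq_or_ne q 0 with rfl | hq
  · simp
  have hβi : β⁻¹ ≠ 0 := inv_ne_zero hβ
  set r := q.rootMultiplicity β⁻¹ with hr
  set s := q /ₘ (X - Polynomial.C β⁻¹) ^ r with hs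
  have key : (X - Polynomial.C β⁻¹) ^ r * s = q :=
    pow_mul_divByMonic_rootMultiplicity_eq q β⁻¹
  have hsev : eval β⁻¹ s ≠ 0 := eval_divByMonic_pow_rootMultiplicity_ne_zero β⁻¹ hq
  have hs0 : s ≠ 0 := fun h => hsev (by simp [h])
  have hrevs : eval β s.reverse ≠ 0 := by
    haveI : Invertible (β⁻¹) := invertibleOfNonzero hβi
    have h2 := eval₂_reverse_eq_zero_iff (RingHom.id K) (β⁻¹) s
    rw [invOf_eq_inv, inv_inv] at h2
    intro h
    exact hsev (h2.mp h)
  have e1 : q.reverse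
      = (Polynomial.C (-β⁻¹)) ^ r * ((X - Polynomial.C β) ^ r * s.reverse) := by
    conv_lhs => rw [← key]
    rw [reverse_mul_of_domain, my_reverse_pow, my_reverse_X_sub_C hβi, inv_inv,
      mul_pow, mul_assoc]
  have hne2 : (X - Polynomial.C β) ^ r * s.reverse ≠ 0 :=
    mul_ne_zero (pow_ne_zero _ (X_sub_C_ne_zero β)) (by simpa [reverse_eq_zero] using hs0)
  have hne : (Polynomial.C (-β⁻¹) : K[X]) ^ r * ((X - Polynomial.C β) ^ r * s.reverse) ≠ 0 :=
    mul_ne_zero (pow_ne_zero _ (by simpa using hβi)) hne2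
  rw [e1, rootMultiplicity_mul hne, rootMultiplicity_mul hne2]
  have : rootMultiplicity β ((Polynomial.C (-β⁻¹) : K[X]) ^ r) = 0 := by
    apply rootMultiplicity_eq_zero
    simp [IsRoot, hβi]
  rw [this, rootMultiplicity_X_sub_C_pow, rootMultiplicity_eq_zero hrevs]
  omega

lemma my_conj_eq_inv {β : ℂ} (hβ : ‖β‖ = 1) : (starRingEnd ℂ) β = β⁻¹ := by
  have h1 : β * (starRingEnd ℂ) β = 1 := by
    rw [Complex.mul_conj, Complex.normSq_eq_norm_sq, hβ]
    norm_num
  exact eq_inv_of_mul_eq_one_right h1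

lemma my_even_core (h : ℂ[X]) (hh : h ≠ 0) {β : ℂ} (hβ : ‖β‖ = 1) :
    (h * (h.map (starRingEnd ℂ)).reverse).rootMultiplicity β
      = 2 * h.rootMultiplicity β := by
  have hβ0 : β ≠ 0 := fun h0 => by simp [h0] at hβ
  have hq0 : h.map (starRingEnd ℂ) ≠ 0 :=
    (Polynomial.map_ne_zero_iff (starRingEnd ℂ).injective).mpr hh
  have hrev0 : (h.map (starRingEnd ℂ)).reverse ≠ 0 := by
    simpa [reverse_eq_zero] using hq0
  rw [rootMultiplicity_mul (mul_ne_zero hh hrev0),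
    my_rootMult_reverse _ hβ0, ← my_conj_eq_inv hβ,
    ← eq_rootMultiplicity_map (starRingEnd ℂ).injective β]
  ring

/-- If `g ∈ ℂ[t]` is nonzero and `α` is a root of `g` with `|α| = 1`, then the
polynomial `t^{deg g}·g(t)·conj(g)(1/t)` (which equals `g * (g.map conj).reverse`)
has `α` as a root of even multiplicity.  Consequently, any polynomial in `ℂ[t]`
having a unit-norm root of odd multiplicity is not a norm
`λ·t^k·g(t)·conj(g)(1/t)` in `ℂ[t^{±1}]`. -/
theorem stmt_3 (g : ℂ[X]) (hg : g ≠ 0) (α : ℂ) (hα : ‖α‖ = 1)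
    (hroot : g.IsRoot α) :
    Even ((g * (g.map (starRingEnd ℂ)).reverse).rootMultiplicity α) ∧
      ∀ p : ℂ[X], (∃ β : ℂ, ‖β‖ = 1 ∧ Odd (p.rootMultiplicity β)) →
        ¬ ∃ (lam : ℂ) (k : ℤ) (h : ℂ[X]),
          p.toLaurent = LaurentPolynomial.C lam * T k * h.toLaurent *
            invert (h.map (starRingEnd ℂ)).toLaurent := by
  constructor
  · rw [my_even_core g hg hα]
    exact even_two_mul _
  · rintro p ⟨β, hβ, hodd⟩ ⟨lam, k, h, heq⟩
    have hβ0 : β ≠ 0 := fun h0 => by simp [h0] at hβ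
    have hp0 : p ≠ 0 := by
      rintro rfl
      simp [rootMultiplicity_zero, Nat.odd_iff] at hodd
    have hh0 : h ≠ 0 := by
      rintro rfl
      simp only [Polynomial.map_zero, map_zero, mul_zero, zero_mul] at heq
      exact hp0 (Polynomial.toLaurent_eq_zero.mp heq)
    have hlam0 : lam ≠ 0 := by
      rintro rfl
      rw [map_zero, zero_mul, zero_mul, zero_mul] at heq
      exact hp0 (Polynomial.toLaurent_eq_zero.mp heq)
    set q := h.map (starRingEnd ℂ) with hq
    set n : ℤ := (q.natDegree : ℤ) with hn
    have hinv : invert (q.toLaurent) = (q.reverse).toLaurent * T (-n) := by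
      rw [toLaurent_reverse, mul_assoc, ← T_add]
      simp [hn]
    have heq2 : p.toLaurent
        = LaurentPolynomial.C lam * (h * q.reverse).toLaurent * T (k - n) := by
      rw [heq, hinv, map_mul]
      rw [show k - n = k + -n by ring, T_add]
      ring
    have hP0 : h * q.reverse ≠ 0 :=
      mul_ne_zero hh0 (by
        simp only [ne_eq, reverse_eq_zero, hq, Polynomial.map_eq_zero_iff
          (starRingEnd ℂ).injective]
        exact hh0)
    have hPmul : (h * q.reverse).rootMultiplicity β = 2 * h.rootMultiplicity β :=
      my_even_core h hh0 hβ
    rcases le_or_gt 0 (k - n) with hd | hd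
    · have : p.toLaurent
          = (Polynomial.C lam * (h * q.reverse) * X ^ (k - n).toNat).toLaurent := by
        rw [map_mul, map_mul, Polynomial.toLaurent_C, Polynomial.toLaurent_X_pow,
          Int.toNat_of_nonneg hd, heq2]
      have hpe : p = Polynomial.C lam * (h * q.reverse) * X ^ (k - n).toNat :=
        Polynomial.toLaurent_injective this
      have hXne : (X : ℂ[X]) ^ (k - n).toNat ≠ 0 := pow_ne_zero _ X_ne_zero
      have hne : Polynomial.C lam * (h * q.reverse) * X ^ (k - n).toNat ≠ 0 :=
        mul_ne_zero (mul_ne_zero (by simpa using hlam0) hP0) hXne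
      rw [hpe, rootMultiplicity_mul hne,
        rootMultiplicity_mul (mul_ne_zero (by simpa using hlam0) hP0),
        rootMultiplicity_C, hPmul,
        rootMultiplicity_eq_zero (p := (X : ℂ[X]) ^ (k - n).toNat)
          (by simp [IsRoot, hβ0])] at hodd
      simp [Nat.odd_iff, Nat.mul_mod_right] at hodd
    · have : (p * X ^ (n - k).toNat).toLaurent
          = (Polynomial.C lam * (h * q.reverse)).toLaurent := by
        rw [map_mul, Polynomial.toLaurent_X_pow, map_mul, Polynomial.toLaurent_C,
          heq2, Int.toNat_of_nonneg (by omega : (0:ℤ) ≤ n - k), mul_assoc, ← T_add]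
        simp
      have hpe : p * X ^ (n - k).toNat = Polynomial.C lam * (h * q.reverse) :=
        Polynomial.toLaurent_injective this
      have hXne : (X : ℂ[X]) ^ (n - k).toNat ≠ 0 := pow_ne_zero _ X_ne_zero
      have h1 : (p * X ^ (n - k).toNat).rootMultiplicity β
          = p.rootMultiplicity β := by
        rw [rootMultiplicity_mul (mul_ne_zero hp0 hXne),
          rootMultiplicity_eq_zero (p := (X : ℂ[X]) ^ (n - k).toNat)
            (by simp [IsRoot, hβ0])]
        omega
      have h2 : (Polynomial.C lam * (h * q.reverse)).rootMultiplicity β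
          = 2 * h.rootMultiplicity β := by
        rw [rootMultiplicity_mul (mul_ne_zero (by simpa using hlam0) hP0),
          rootMultiplicity_C, hPmul]
        omega
      rw [← h1, hpe, h2] at hodd
      simp [Nat.odd_iff, Nat.mul_mod_right] at hodd
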